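/- Every countably generated semigroup can be embedded into a simple two-generated semigroup. -/

import Mathlib

namespace CSE


variable {S : Type} [Semigroup S]

abbrev Mach (S : Type) [Semigroup S] := WithOne S × ℕ × ℕ
abbrev St (S : Type) [Semigroup S] := (Mach S × Bool) × ℕ

def exec (σ : ℕ → WithOne S) (m : Mach S) : Mach S :=
  ⟨if m.2.1 = 2 then σ m.2.2 * m.1 else m.1, 0,
   if m.2.1 = 1 then m.2.2 + 1 else if m.2.1 = 2 then 0 else if m.2.1 = 3 then 0 else m.2.2⟩

def amap (σ : ℕ → WithOne S) : Function.End (St S) := fun z =>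
  match z with
  | ((m, _), 0) => ((m, false), 0)
  | ((m, true), 1) => (((m.1, m.2.1 + 1, m.2.2), false), 0)
  | ((m, false), 1) => ((m, false), 0)
  | ((m, true), 2) => ((exec σ m, false), 1)
  | ((m, false), 2) => ((m, false), 1)
  | ((m, _), (q+3)) => ((m, false), q+2)

def bmap : Function.End (St S) := fun z => ((z.1.1, true), z.2 + 1)

variable (σ : ℕ → WithOne S)

lemma amap_ff_step (m : Mach S) (q : ℕ) :
    amap σ ((m, false), q + 1) = ((m, false), q) := by
  match q with
  | 0 => rfl
  | 1 => rfl
  | (q+2) => rfl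

lemma amap_high (m : Mach S) (L : Bool) (q : ℕ) :
    amap σ ((m, L), q + 3) = ((m, false), q + 2) := by cases L <;> rfl

lemma amap_L (z : St S) : ∃ m p, amap σ z = ((m, false), p) := by
  obtain ⟨⟨m, L⟩, p⟩ := z
  match p, L with
  | 0, true => exact ⟨m, 0, rfl⟩
  | 0, false => exact ⟨m, 0, rfl⟩
  | 1, true => exact ⟨_, 0, rfl⟩
  | 1, false => exact ⟨m, 0, rfl⟩
  | 2, true => exact ⟨_, 1, rfl⟩
  | 2, false => exact ⟨m, 1, rfl⟩
  | (q+3), true => exact ⟨m, q+2, rfl⟩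
  | (q+3), false => exact ⟨m, q+2, rfl⟩

lemma bmap_L (z : St S) : ∃ m p, bmap (S := S) z = ((m, true), p + 1) :=
  ⟨z.1.1, z.2, rfl⟩

lemma drainFF (D : ℕ) : ∀ (p : ℕ) (m : Mach S),
    (amap σ ^ D) ((m, false), p + D) = ((m, false), p) := by
  induction D with
  | zero => intro p m; rfl
  | succ D ih =>
    intro p m
    have h1 : (amap σ ^ (D+1)) ((m, false), p + (D+1))
        = (amap σ ^ D) (amap σ ((m, false), (p + D) + 1)) := by
      rw [pow_succ]
      have : p + (D + 1) = (p + D) + 1 := by omega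
      rw [this]
      rfl
    rw [h1, amap_ff_step, ih]

lemma drain (D p : ℕ) (hD : 1 ≤ D) (h3 : 3 ≤ p + D) (m : Mach S) (L : Bool) :
    (amap σ ^ D) ((m, L), p + D) = ((m, false), p) := by
  obtain ⟨D', rfl⟩ : ∃ D', D = D' + 1 := ⟨D - 1, by omega⟩
  obtain ⟨q, hq⟩ : ∃ q, p + (D' + 1) = q + 3 := ⟨p + D' + 1 - 3, by omega⟩
  have h1 : (amap σ ^ (D'+1)) ((m, L), p + (D'+1))
      = (amap σ ^ D') (amap σ ((m, L), q + 3)) := by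
    rw [pow_succ, hq]; rfl
  rw [h1, amap_high]
  have : q + 2 = p + D' := by omega
  rw [this, drainFF]

lemma lift (M : ℕ) (hM : 1 ≤ M) (m : Mach S) (L : Bool) (p : ℕ) :
    (bmap (S := S) ^ M) ((m, L), p) = ((m, true), p + M) := by
  induction M with
  | zero => omega
  | succ M ih =>
    rcases Nat.eq_zero_or_pos M with h | h
    · subst h; rfl
    · have h1 : (bmap (S := S) ^ (M+1)) ((m, L), p)
          = bmap (S := S) ((bmap (S := S) ^ M) ((m, L), p)) := by
        rw [pow_succ']; rfl
      rw [h1, ih h]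
      show ((m, true), (p + M) + 1) = ((m, true), p + (M + 1))
      rw [Nat.add_assoc]

def evalW : List Bool → Function.End (St S)
  | [] => 1
  | false :: l => evalW l * amap σ
  | true :: l => evalW l * bmap

lemma evalW_append (u v : List Bool) :
    evalW σ (u ++ v) = evalW σ v * evalW σ u := by
  induction u with
  | nil => simp [evalW]
  | cons c u ih =>
    cases c
    · show evalW σ (u ++ v) * _ = _
      rw [ih, mul_assoc]; rfl
    · show evalW σ (u ++ v) * _ = _
      rw [ih, mul_assoc]; rfl

lemma highSilent : ∀ (l : List Bool) (m : Mach S) (L : Bool) (p : ℕ),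
    l.length + 3 ≤ p →
    ∃ (L' : Bool) (q : ℕ), evalW σ l ((m, L), p) = ((m, L'), q) ∧
      q + l.count false = p + l.count true := by
  intro l
  induction l with
  | nil =>
    intro m L p _
    exact ⟨L, p, rfl, by simp⟩
  | cons c l ih =>
    intro m L p hp
    cases c
    · -- α
      obtain ⟨q', hq'⟩ : ∃ q', p = q' + 3 := ⟨p - 3, by simp at hp; omega⟩
      have hstep : evalW σ (false :: l) ((m, L), p)
          = evalW σ l (amap σ ((m, L), p)) := rfl
      obtain ⟨L', q, heq, hcount⟩ := ih m false (q' + 2) (by simp at hp ⊢; omega)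
      refine ⟨L', q, ?_, ?_⟩
      · rw [hstep, hq', amap_high, heq]
      · simp only [List.count_cons] at *
        simp at hcount ⊢
        omega
    · -- β
      have hstep : evalW σ (true :: l) ((m, L), p)
          = evalW σ l (bmap ((m, L), p)) := rfl
      have hb : bmap (S := S) ((m, L), p) = ((m, true), p + 1) := rfl
      obtain ⟨L', q, heq, hcount⟩ := ih m true (p + 1) (by simp at hp ⊢; omega)
      refine ⟨L', q, ?_, ?_⟩
      · rw [hstep, hb, heq]
      · simp only [List.count_cons] at *
        simp at hcount ⊢
        omega

def Aunit (σ : ℕ → WithOne S) : Function.End (St S) := amap σ * bmap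
def Bunit (σ : ℕ → WithOne S) : Function.End (St S) := amap σ * amap σ * bmap * bmap

variable (σ : ℕ → WithOne S)

lemma Aunit_p0 (m : Mach S) (L : Bool) :
    Aunit σ ((m, L), 0) = (((m.1, m.2.1 + 1, m.2.2), false), 0) := rfl
lemma Aunit_p1 (m : Mach S) (L : Bool) :
    Aunit σ ((m, L), 1) = ((exec σ m, false), 1) := rfl
lemma Aunit_p2 (m : Mach S) (L : Bool) (q : ℕ) :
    Aunit σ ((m, L), q + 2) = ((m, false), q + 2) := rfl
lemma Bunit_p0 (m : Mach S) (L : Bool) :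
    Bunit σ ((m, L), 0) = ((exec σ m, false), 0) := rfl
lemma Bunit_p1 (m : Mach S) (L : Bool) :
    Bunit σ ((m, L), 1) = ((m, false), 1) := rfl
lemma Bunit_p2 (m : Mach S) (L : Bool) (q : ℕ) :
    Bunit σ ((m, L), q + 2) = ((m, false), q + 2) := rfl

def J0 (μ k : ℕ) : WithOne S := if μ = 2 then σ k else 1

def NE : Function.End (St S) := Bunit σ * Aunit σ * Aunit σ * Aunit σ * Bunit σ
def INCpair : Function.End (St S) := Bunit σ * Aunit σ
def DEPtr : Function.End (St S) := Bunit σ * Aunit σ * Aunit σ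
def blockE (n : ℕ) : Function.End (St S) := DEPtr σ * INCpair σ ^ n

lemma NE_p0 (y : WithOne S) (μ k : ℕ) (L : Bool) :
    NE σ (((y, μ, k), L), 0) = (((J0 σ μ k * y, 0, 0), false), 0) := by
  show Bunit σ (Aunit σ (Aunit σ (Aunit σ (Bunit σ (((y, μ, k), L), 0))))) = _
  rw [Bunit_p0, Aunit_p0, Aunit_p0, Aunit_p0, Bunit_p0]
  by_cases hμ : μ = 2 <;> simp [exec, J0, hμ]

lemma NE_p1 (m : Mach S) (L : Bool) :
    NE σ ((m, L), 1) = ((exec σ m, false), 1) := by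
  show Bunit σ (Aunit σ (Aunit σ (Aunit σ (Bunit σ ((m, L), 1))))) = _
  rw [Bunit_p1, Aunit_p1, Aunit_p1, Aunit_p1, Bunit_p1]
  rfl

lemma NE_p2 (m : Mach S) (L : Bool) (q : ℕ) :
    NE σ ((m, L), q + 2) = ((m, false), q + 2) := by
  show Bunit σ (Aunit σ (Aunit σ (Aunit σ (Bunit σ ((m, L), q + 2))))) = _
  rw [Bunit_p2, Aunit_p2, Aunit_p2, Aunit_p2, Bunit_p2]

lemma INCpair_p0 (y : WithOne S) (k : ℕ) :
    INCpair σ (((y, 0, k), false), 0) = (((y, 0, k + 1), false), 0) := rfl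
lemma INCpair_p1 (y : WithOne S) (k : ℕ) :
    INCpair σ (((y, 0, k), false), 1) = (((y, 0, k), false), 1) := rfl
lemma INCpair_p2 (m : Mach S) (q : ℕ) :
    INCpair σ ((m, false), q + 2) = ((m, false), q + 2) := rfl

lemma INCpow_p0 (n : ℕ) (y : WithOne S) (k : ℕ) :
    (INCpair σ ^ n) (((y, 0, k), false), 0) = (((y, 0, k + n), false), 0) := by
  induction n generalizing k with
  | zero => rfl
  | succ n ih =>
    have h : (INCpair σ ^ (n+1)) (((y, 0, k), false), 0)
        = (INCpair σ ^ n) (INCpair σ (((y, 0, k), false), 0)) := by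
      rw [pow_succ]; rfl
    rw [h, INCpair_p0, ih]
    have : k + 1 + n = k + (n + 1) := by omega
    rw [this]

lemma INCpow_p1 (n : ℕ) (y : WithOne S) (k : ℕ) :
    (INCpair σ ^ n) (((y, 0, k), false), 1) = (((y, 0, k), false), 1) := by
  induction n with
  | zero => rfl
  | succ n ih =>
    have h : (INCpair σ ^ (n+1)) (((y, 0, k), false), 1)
        = (INCpair σ ^ n) (INCpair σ (((y, 0, k), false), 1)) := by
      rw [pow_succ]; rfl
    rw [h, INCpair_p1, ih]

lemma INCpow_p2 (n : ℕ) (m : Mach S) (q : ℕ) :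
    (INCpair σ ^ n) ((m, false), q + 2) = ((m, false), q + 2) := by
  induction n with
  | zero => rfl
  | succ n ih =>
    have h : (INCpair σ ^ (n+1)) ((m, false), q + 2)
        = (INCpair σ ^ n) (INCpair σ ((m, false), q + 2)) := by
      rw [pow_succ]; rfl
    rw [h, INCpair_p2, ih]

lemma DEPtr_p0 (y : WithOne S) (k : ℕ) :
    DEPtr σ (((y, 0, k), false), 0) = (((σ k * y, 0, 0), false), 0) := rfl
lemma DEPtr_p1 (y : WithOne S) (k : ℕ) :
    DEPtr σ (((y, 0, k), false), 1) = (((y, 0, k), false), 1) := rfl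
lemma DEPtr_p2 (m : Mach S) (q : ℕ) :
    DEPtr σ ((m, false), q + 2) = ((m, false), q + 2) := rfl

lemma blockE_p0 (n : ℕ) (y : WithOne S) :
    blockE σ n (((y, 0, 0), false), 0) = (((σ n * y, 0, 0), false), 0) := by
  show DEPtr σ ((INCpair σ ^ n) (((y, 0, 0), false), 0)) = _
  rw [INCpow_p0, DEPtr_p0]
  simp

lemma blockE_p1 (n : ℕ) (y : WithOne S) (k : ℕ) :
    blockE σ n (((y, 0, k), false), 1) = (((y, 0, k), false), 1) := by
  show DEPtr σ ((INCpair σ ^ n) (((y, 0, k), false), 1)) = _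
  rw [INCpow_p1, DEPtr_p1]

lemma blockE_p2 (n : ℕ) (m : Mach S) (q : ℕ) :
    blockE σ n ((m, false), q + 2) = ((m, false), q + 2) := by
  show DEPtr σ ((INCpair σ ^ n) ((m, false), q + 2)) = _
  rw [INCpow_p2, DEPtr_p2]

/-- invariant describing the action of accumulated program words. -/
def INV (e : Function.End (St S)) (d : WithOne S) : Prop :=
  (∀ (y : WithOne S) (μ k : ℕ) (L : Bool),
      e (((y, μ, k), L), 0) = (((d * J0 σ μ k * y, 0, 0), false), 0)) ∧
  (∀ (m : Mach S) (L : Bool), e ((m, L), 1) = ((exec σ m, false), 1)) ∧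
  (∀ (m : Mach S) (L : Bool) (q : ℕ), e ((m, L), q + 2) = ((m, false), q + 2))

lemma INV_NE : INV σ (NE σ) 1 := by
  refine ⟨fun y μ k L => ?_, NE_p1 σ, NE_p2 σ⟩
  rw [NE_p0]
  simp

lemma exec_mu0 (m : Mach S) : ∃ y k, exec σ m = (y, 0, k) := ⟨_, _, rfl⟩

lemma INV_step (e : Function.End (St S)) (d : WithOne S) (n : ℕ) (h : INV σ e d) :
    INV σ (blockE σ n * e) (σ n * d) := by
  obtain ⟨h0, h1, h2⟩ := h
  refine ⟨fun y μ k L => ?_, fun m L => ?_, fun m L q => ?_⟩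
  · show blockE σ n (e (((y, μ, k), L), 0)) = _
    rw [h0, blockE_p0]
    simp [mul_assoc]
  · show blockE σ n (e ((m, L), 1)) = _
    rw [h1]
    obtain ⟨y', k', hy⟩ := exec_mu0 σ m
    rw [hy, blockE_p1]
  · show blockE σ n (e ((m, L), q + 2)) = _
    rw [h2, blockE_p2]

def wordFor (l : List ℕ) : Function.End (St S) :=
  l.foldl (fun acc n => blockE σ n * acc) (NE σ)

lemma INV_fold : ∀ (l : List ℕ) (acc : Function.End (St S)) (d : WithOne S),
    INV σ acc d → INV σ (l.foldl (fun acc n => blockE σ n * acc) acc)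
      (l.foldl (fun w n => σ n * w) d) := by
  intro l
  induction l with
  | nil => intro acc d h; exact h
  | cons n l ih =>
    intro acc d h
    exact ih _ _ (INV_step σ acc d n h)

lemma INV_wordFor (l : List ℕ) :
    INV σ (wordFor σ l) (l.foldl (fun w n => σ n * w) 1) :=
  INV_fold σ l _ _ (INV_NE σ)

/-- the embedding map. -/
def phiFun (s : S) : Function.End (St S) := fun z =>
  match z with
  | (((y, μ, k), _), 0) => ((((s : WithOne S) * J0 σ μ k * y, 0, 0), false), 0)
  | ((m, _), 1) => ((exec σ m, false), 1)
  | ((m, _), (q+2)) => ((m, false), q+2)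

lemma phiFun_p0 (s : S) (y : WithOne S) (μ k : ℕ) (L : Bool) :
    phiFun σ s (((y, μ, k), L), 0)
      = ((((s : WithOne S) * J0 σ μ k * y, 0, 0), false), 0) := rfl
lemma phiFun_p1 (s : S) (m : Mach S) (L : Bool) :
    phiFun σ s ((m, L), 1) = ((exec σ m, false), 1) := rfl
lemma phiFun_p2 (s : S) (m : Mach S) (L : Bool) (q : ℕ) :
    phiFun σ s ((m, L), q + 2) = ((m, false), q + 2) := rfl

lemma phiFun_mul (s t : S) : phiFun σ (s * t) = phiFun σ s * phiFun σ t := by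
  funext z
  obtain ⟨⟨⟨y, μ, k⟩, L⟩, p⟩ := z
  match p with
  | 0 =>
    show _ = phiFun σ s (phiFun σ t (((y, μ, k), L), 0))
    rw [phiFun_p0, phiFun_p0, phiFun_p0]
    have : J0 σ 0 0 = (1 : WithOne S) := rfl
    rw [this]
    simp [mul_assoc]
  | 1 =>
    show _ = phiFun σ s (phiFun σ t (((y, μ, k), L), 1))
    rw [phiFun_p1, phiFun_p1, phiFun_p1]
    congr 2
  | (q+2) =>
    show _ = phiFun σ s (phiFun σ t (((y, μ, k), L), q+2))
    rw [phiFun_p2, phiFun_p2, phiFun_p2]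

lemma phiFun_eq_word (s : S) (l : List ℕ)
    (hl : (l.map σ).prod = (s : WithOne S)) :
    phiFun σ s = wordFor σ l.reverse := by
  obtain ⟨h0, h1, h2⟩ := INV_wordFor σ l.reverse
  have hd : l.reverse.foldl (fun w n => σ n * w) 1 = (s : WithOne S) := by
    rw [List.foldl_reverse]
    rw [← hl, List.prod_eq_foldr, List.foldr_map]
  funext z
  obtain ⟨⟨⟨y, μ, k⟩, L⟩, p⟩ := z
  match p with
  | 0 => rw [phiFun_p0, h0, hd]
  | 1 => rw [phiFun_p1, h1]
  | (q+2) => rw [phiFun_p2, h2]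

def TT : Subsemigroup (Function.End (St S)) := Subsemigroup.closure {amap σ, bmap}

lemma amap_mem : amap σ ∈ TT σ := Subsemigroup.subset_closure (Set.mem_insert _ _)
lemma bmap_mem : bmap (S := S) ∈ TT σ :=
  Subsemigroup.subset_closure (Set.mem_insert_of_mem _ rfl)

lemma pow_mem_TT {g : Function.End (St S)} (hg : g ∈ TT σ) :
    ∀ n : ℕ, 1 ≤ n → g ^ n ∈ TT σ := by
  intro n hn
  induction n with
  | zero => omega
  | succ n ih =>
    rcases Nat.eq_zero_or_pos n with h | h
    · subst h; simpa using hg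
    · rw [pow_succ]
      exact mul_mem (ih h) hg


lemma exists_list {x : Function.End (St S)} (hx : x ∈ TT σ) :
    ∃ l : List Bool, l ≠ [] ∧ x = evalW σ l := by
  induction hx using Subsemigroup.closure_induction with
  | mem x h =>
    rcases h with h | h
    · refine ⟨[false], by simp, ?_⟩
      rw [h]; show amap σ = evalW σ [] * amap σ; rw [show evalW σ [] = 1 from rfl, one_mul]
    · refine ⟨[true], by simp, ?_⟩
      rw [Set.mem_singleton_iff.mp h]
      show bmap = evalW σ [] * bmap; rw [show evalW σ [] = 1 from rfl, one_mul]
  | mul x y hx hy ihx ihy =>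
    obtain ⟨lx, hlx, hex⟩ := ihx
    obtain ⟨ly, hly, hey⟩ := ihy
    refine ⟨ly ++ lx, by simp [hly], ?_⟩
    rw [evalW_append, hex, hey]


lemma Aunit_mem : Aunit σ ∈ TT σ := mul_mem (amap_mem σ) (bmap_mem σ)
lemma Bunit_mem : Bunit σ ∈ TT σ :=
  mul_mem (mul_mem (mul_mem (amap_mem σ) (amap_mem σ)) (bmap_mem σ)) (bmap_mem σ)
lemma NE_mem : NE σ ∈ TT σ :=
  mul_mem (mul_mem (mul_mem (mul_mem (Bunit_mem σ) (Aunit_mem σ)) (Aunit_mem σ))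
    (Aunit_mem σ)) (Bunit_mem σ)
lemma INCpair_mem : INCpair σ ∈ TT σ := mul_mem (Bunit_mem σ) (Aunit_mem σ)
lemma DEPtr_mem : DEPtr σ ∈ TT σ :=
  mul_mem (mul_mem (Bunit_mem σ) (Aunit_mem σ)) (Aunit_mem σ)

lemma blockE_mem (n : ℕ) : blockE σ n ∈ TT σ := by
  rcases Nat.eq_zero_or_pos n with h | h
  · subst h
    show DEPtr σ * INCpair σ ^ 0 ∈ TT σ
    rw [pow_zero, mul_one]
    exact DEPtr_mem σ
  · exact mul_mem (DEPtr_mem σ) (pow_mem_TT σ (INCpair_mem σ) n h)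

lemma wordFor_mem (l : List ℕ) : wordFor σ l ∈ TT σ := by
  have key : ∀ (l : List ℕ) (acc : Function.End (St S)), acc ∈ TT σ →
      l.foldl (fun acc n => blockE σ n * acc) acc ∈ TT σ := by
    intro l
    induction l with
    | nil => intro acc h; exact h
    | cons n l ih => intro acc h; exact ih _ (mul_mem (blockE_mem σ n) h)
  exact key l _ (NE_mem σ)

lemma phiFun_mem (s : S) (hE : ∃ l : List ℕ, (l.map σ).prod = (s : WithOne S)) :
    phiFun σ s ∈ TT σ := by
  obtain ⟨l, hl⟩ := hE
  rw [phiFun_eq_word σ s l hl]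
  exact wordFor_mem σ _

/-- the key simplicity lemma. -/
lemma sandwich (t w : Function.End (St S)) (ht : t ∈ TT σ) (hw : w ∈ TT σ) :
    ∃ x ∈ TT σ, ∃ y ∈ TT σ, ∀ z, x (t (y z)) = w z := by
  obtain ⟨ls, hlsne, hts⟩ := exists_list σ ht
  obtain ⟨lw, hlwne, htw⟩ := exists_list σ hw
  rcases List.eq_nil_or_concat lw with h | ⟨lw', c, hc⟩
  · exact absurd h hlwne
  have hnale : ls.count false ≤ ls.length := List.count_le_length
  set n := ls.length with hn
  set na := ls.count false with hna
  set nb := ls.count true with hnb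
  set M := n + 5 with hM
  set D := (n - na) + 5 + nb with hD
  cases c
  · -- w ends with letter α
    refine ⟨amap σ ^ D, pow_mem_TT σ (amap_mem σ) D (by omega), bmap (S := S) ^ M * w,
      mul_mem (pow_mem_TT σ (bmap_mem σ) M (by omega)) hw, ?_⟩
    intro z
    have hwz : ∃ m p, w z = ((m, false), p) := by
      have h1 : w z = amap σ (evalW σ lw' z) := by
        rw [htw, hc, List.concat_eq_append, evalW_append]
        rfl
      rw [h1]; exact amap_L σ _
    obtain ⟨m', p', hz'⟩ := hwz
    have hy : (bmap (S := S) ^ M * w) z = ((m', true), p' + M) := by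
      show (bmap (S := S) ^ M) (w z) = _
      rw [hz']; exact lift M (by omega) m' false p'
    obtain ⟨L'', q, heq, hcnt⟩ := highSilent σ ls m' true (p' + M) (by omega)
    have hts' : t ((bmap (S := S) ^ M * w) z) = ((m', L''), q) := by rw [hy, hts, heq]
    have hq : q = p' + D := by omega
    calc (amap σ ^ D) (t ((bmap (S := S) ^ M * w) z)) = (amap σ ^ D) ((m', L''), q) := by rw [hts']
    _ = ((m', false), p') := by rw [hq]; exact drain σ D p' (by omega) (by omega) m' L''
    _ = w z := hz'.symm
  · -- w ends with letter β
    refine ⟨bmap (S := S) * amap σ ^ (D + 1),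
      mul_mem (bmap_mem σ) (pow_mem_TT σ (amap_mem σ) (D + 1) (by omega)), bmap (S := S) ^ M * w,
      mul_mem (pow_mem_TT σ (bmap_mem σ) M (by omega)) hw, ?_⟩
    intro z
    have hwz : ∃ m p, w z = ((m, true), p + 1) := by
      have h1 : w z = bmap (evalW σ lw' z) := by
        rw [htw, hc, List.concat_eq_append, evalW_append]
        rfl
      rw [h1]; exact bmap_L _
    obtain ⟨m', p', hz'⟩ := hwz
    have hy : (bmap (S := S) ^ M * w) z = ((m', true), (p' + 1) + M) := by
      show (bmap (S := S) ^ M) (w z) = _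
      rw [hz']; exact lift M (by omega) m' true (p' + 1)
    obtain ⟨L'', q, heq, hcnt⟩ := highSilent σ ls m' true ((p' + 1) + M) (by omega)
    have hts' : t ((bmap (S := S) ^ M * w) z) = ((m', L''), q) := by rw [hy, hts, heq]
    have hq : q = p' + (D + 1) := by omega
    show bmap ((amap σ ^ (D + 1)) (t ((bmap (S := S) ^ M * w) z))) = w z
    rw [hts', hq, drain σ (D + 1) p' (by omega) (by omega) m' L'', hz']
    rfl

/-- the two generators generate everything, internally. -/
lemma gen_top :
    Subsemigroup.closure
      ({⟨amap σ, amap_mem σ⟩, ⟨bmap, bmap_mem σ⟩} : Set (TT σ)) = ⊤ := by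
  rw [eq_top_iff]
  rintro ⟨x, hx⟩ -
  have key : ∀ (x : Function.End (St S)) (hx : x ∈ TT σ),
      (⟨x, hx⟩ : TT σ) ∈ Subsemigroup.closure
        ({⟨amap σ, amap_mem σ⟩, ⟨bmap, bmap_mem σ⟩} : Set (TT σ)) := by
    intro x hx
    induction hx using Subsemigroup.closure_induction with
    | mem x h =>
      rcases h with h | h
      · have : (⟨x, by rw [h]; exact amap_mem σ⟩ : TT σ) = ⟨amap σ, amap_mem σ⟩ :=
          Subtype.ext h
        rw [this]
        exact Subsemigroup.subset_closure (Set.mem_insert _ _)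
      · have hxb : x = bmap := Set.mem_singleton_iff.mp h
        have : (⟨x, by rw [hxb]; exact bmap_mem σ⟩ : TT σ) = ⟨bmap, bmap_mem σ⟩ :=
          Subtype.ext hxb
        rw [this]
        exact Subsemigroup.subset_closure (Set.mem_insert_of_mem _ rfl)
    | mul x y hx hy ihx ihy =>
      exact mul_mem ihx ihy
  exact key x hx

end CSE

/-- Every countably generated semigroup can be embedded into a simple
two-generated semigroup, where a semigroup `T` is simple iff `T a T = T`
for every `a` in `T`. -/
theorem countably_generated_semigroup_embeds_into_simple_two_generated
    (S : Type) [Semigroup S]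
    (hS : ∃ X : Set S, X.Countable ∧ Subsemigroup.closure X = ⊤) :
    ∃ (T : Type) (_ : Semigroup T) (f : S →ₙ* T),
      Function.Injective f ∧
      (∀ a : T, {z : T | ∃ x y : T, x * a * y = z} = Set.univ) ∧
      ∃ a b : T, Subsemigroup.closure ({a, b} : Set T) = ⊤ := by
  classical
  obtain ⟨X, hXc, hXtop⟩ := hS
  have hσE : ∃ σ : ℕ → WithOne S,
      ∀ s : S, ∃ l : List ℕ, (l.map σ).prod = (s : WithOne S) := by
    by_cases hne : X.Nonempty
    · obtain ⟨g, hg⟩ := hXc.exists_eq_range hne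
      refine ⟨fun n => (g n : WithOne S), fun s => ?_⟩
      have hs : s ∈ Subsemigroup.closure X := by
        rw [hXtop]; exact Subsemigroup.mem_top s
      induction hs using Subsemigroup.closure_induction with
      | mem x h =>
        rw [hg] at h
        obtain ⟨n, rfl⟩ := h
        exact ⟨[n], by simp⟩
      | mul x y hx hy ihx ihy =>
        obtain ⟨lx, hlx⟩ := ihx
        obtain ⟨ly, hly⟩ := ihy
        refine ⟨lx ++ ly, ?_⟩
        rw [List.map_append, List.prod_append, hlx, hly]
        exact (WithOne.coe_mul x y).symm
    · refine ⟨fun _ => 1, fun s => ?_⟩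
      have hs : s ∈ Subsemigroup.closure X := by
        rw [hXtop]; exact Subsemigroup.mem_top s
      induction hs using Subsemigroup.closure_induction with
      | mem x h => exact absurd ⟨x, h⟩ hne
      | mul x y hx hy ihx ihy =>
        obtain ⟨lx, hlx⟩ := ihx
        obtain ⟨ly, hly⟩ := ihy
        refine ⟨lx ++ ly, ?_⟩
        rw [List.map_append, List.prod_append, hlx, hly]
        exact (WithOne.coe_mul x y).symm
  obtain ⟨σ, hE⟩ := hσE
  refine ⟨CSE.TT σ, inferInstance,
    { toFun := fun s => ⟨CSE.phiFun σ s, CSE.phiFun_mem σ s (hE s)⟩,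
      map_mul' := fun s t => Subtype.ext (CSE.phiFun_mul σ s t) }, ?_, ?_, ?_⟩
  · -- injectivity
    intro s t hst
    have h1 : CSE.phiFun σ s = CSE.phiFun σ t := congrArg Subtype.val hst
    have h2 := congrFun h1 ((((1 : WithOne S), 0, 0), false), 0)
    rw [CSE.phiFun_p0, CSE.phiFun_p0] at h2
    have h3 : (s : WithOne S) * CSE.J0 σ 0 0 * 1 = (t : WithOne S) * CSE.J0 σ 0 0 * 1 :=
      congrArg (fun z => z.1.1.1) h2
    have h4 : (s : WithOne S) = (t : WithOne S) := by
      simpa [CSE.J0] using h3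
    exact WithOne.coe_inj.mp h4
  · -- simplicity
    intro a
    apply Set.eq_univ_iff_forall.mpr
    intro w
    obtain ⟨x, hx, y, hy, hxy⟩ := CSE.sandwich σ a.1 w.1 a.2 w.2
    exact ⟨⟨x, hx⟩, ⟨y, hy⟩, Subtype.ext (funext fun z => hxy z)⟩
  · -- two-generation
    exact ⟨⟨CSE.amap σ, CSE.amap_mem σ⟩, ⟨CSE.bmap, CSE.bmap_mem σ⟩, CSE.gen_top σ⟩
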